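/- Let A ∈ ℝ^{m × m} and let η ∈ ℝ satisfy η > Re(ρ) for every complex eigenvalue ρ of A. Then there exists a constant C ≥ 0 with ‖e^{tA}‖ ≤ C e^{ηt} for all t ≥ 0, and such that for every δ > 0, every t₀ ∈ ℝ, every continuous ξ : [t₀, ∞) → ℝ^m, and every differentiable y : [t₀, ∞) → ℝ^m with y'(t) = A y(t) + ξ(t) and ‖ξ(t)‖ ≤ δ‖y(t)‖ for all t ≥ t₀, one has ‖y(t)‖ ≤ C ‖y(t₀)‖ e^{(η + Cδ)(t − t₀)} for all t ≥ t₀. -/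

import Mathlib

open Set

section PerturbedODEHelpers

open NormedSpace Filter intervalIntegral MeasureTheory

namespace PerturbedODEAux




attribute [local instance] Matrix.linftyOpNormedRing Matrix.linftyOpNormedAlgebra




lemma exp_apply_eigenvector {E : Type*} [NormedAddCommGroup E] [NormedSpace ℂ E] [CompleteSpace E]
    (g : E →L[ℂ] E) (w : E) (lam : ℂ) (hw : g w = lam • w) :
    NormedSpace.exp g w = Complex.exp lam • w := by
  have hpow : ∀ n : ℕ, (g ^ n) w = lam ^ n • w := by
    intro n; induction n with
    | zero => simp
    | succ n ih =>
        rw [pow_succ, pow_succ, ContinuousLinearMap.mul_apply, hw, _root_.map_smul, ih, smul_smul,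
          mul_comm]
  have hs : Summable (fun n : ℕ => ((n.factorial : ℂ))⁻¹ • g ^ n) := expSeries_summable' g
  have hs2 : Summable (fun n : ℕ => ((n.factorial : ℂ))⁻¹ • lam ^ n) := expSeries_summable' lam
  rw [exp_eq_tsum ℂ]
  calc (∑' n : ℕ, ((n.factorial : ℂ))⁻¹ • g ^ n) w
      = ∑' n : ℕ, (((n.factorial : ℂ))⁻¹ • g ^ n) w :=
        (ContinuousLinearMap.apply ℂ E w).map_tsum hs
    _ = ∑' n : ℕ, (((n.factorial : ℂ))⁻¹ * lam ^ n) • w := by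
        congr 1; funext n
        simp [hpow n, smul_smul]
    _ = (∑' n : ℕ, ((n.factorial : ℂ))⁻¹ * lam ^ n) • w := by
        rw [Summable.tsum_smul_const]
        simpa [smul_eq_mul] using hs2
    _ = Complex.exp lam • w := by
        rw [Complex.exp_eq_exp_ℂ, exp_eq_tsum ℂ]
        simp [smul_eq_mul]





lemma toEuclideanCLM_exp {M : ℕ} (B : Matrix (Fin M) (Fin M) ℂ) :
    Matrix.toEuclideanCLM (𝕜 := ℂ) (NormedSpace.exp B)
      = NormedSpace.exp (Matrix.toEuclideanCLM (𝕜 := ℂ) B) := by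
  have hcont : Continuous ⇑(Matrix.toEuclideanCLM (𝕜 := ℂ) (n := Fin M)) :=
    LinearMap.continuous_of_finiteDimensional
      (AlgHomClass.toAlgHom (Matrix.toEuclideanCLM (𝕜 := ℂ) (n := Fin M))).toLinearMap
  exact map_exp _ hcont B

lemma spectrum_exp_subset {M : ℕ} (B : Matrix (Fin M) (Fin M) ℂ) :
    ∀ μ ∈ spectrum ℂ (NormedSpace.exp (Matrix.toEuclideanCLM (𝕜 := ℂ) B)),
      ∃ lam ∈ spectrum ℂ B, μ = Complex.exp lam := by
  intro μ hμ
  rw [← toEuclideanCLM_exp, AlgEquiv.spectrum_eq] at hμ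
  -- pass to endomorphisms
  set tl := Matrix.toLinAlgEquiv' (R := ℂ) (n := Fin M)
  have hμ' : μ ∈ spectrum ℂ (tl (NormedSpace.exp B)) := by
    rwa [AlgEquiv.spectrum_eq]
  have hEig : Module.End.HasEigenvalue (tl (NormedSpace.exp B)) μ :=
    Module.End.hasEigenvalue_iff_mem_spectrum.mpr hμ'
  set f : Module.End ℂ (Fin M → ℂ) := tl B
  set g : Module.End ℂ (Fin M → ℂ) := tl (NormedSpace.exp B)
  have hcomm : Commute f g := ((Commute.refl B).exp_right).map tl.toAlgHom
  set W := Module.End.eigenspace g μ with hWdef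
  have hW : W ≠ ⊥ := hEig
  have hinv : ∀ x ∈ W, f x ∈ W := by
    intro x hx
    rw [Module.End.mem_eigenspace_iff] at hx ⊢
    calc g (f x) = f (g x) := congrFun (congrArg DFunLike.coe hcomm.symm) x
    _ = μ • f x := by rw [hx, _root_.map_smul]
  haveI : Nontrivial W := Submodule.nontrivial_iff_ne_bot.mpr hW
  obtain ⟨lam, hlam⟩ := Module.End.exists_eigenvalue (f.restrict hinv)
  obtain ⟨w', hw'⟩ := hlam.exists_hasEigenvector
  have hfw : f (w' : Fin M → ℂ) = lam • (w' : Fin M → ℂ) := by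
    have := hw'.apply_eq_smul
    have h2 := congrArg (Subtype.val) this
    simpa using h2
  have hw0 : (w' : Fin M → ℂ) ≠ 0 := by
    simpa [Submodule.coe_eq_zero] using hw'.right
  have hgw : g (w' : Fin M → ℂ) = μ • (w' : Fin M → ℂ) :=
    Module.End.mem_eigenspace_iff.mp w'.2
  refine ⟨lam, ?_, ?_⟩
  · rw [← AlgEquiv.spectrum_eq tl, ← Module.End.hasEigenvalue_iff_mem_spectrum]
    exact Module.End.hasEigenvalue_of_hasEigenvector
      ⟨Module.End.mem_eigenspace_iff.mpr hfw, hw0⟩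
  · -- use the CLM exponential
    set v : EuclideanSpace ℂ (Fin M) := (WithLp.equiv 2 _).symm (w' : Fin M → ℂ)
    have hv0 : v ≠ 0 := by
      simp only [v, ne_eq, WithLp.equiv_symm_apply, WithLp.toLp_eq_zero]
      exact hw0
    have hBv : Matrix.toEuclideanCLM (𝕜 := ℂ) B v = lam • v := by
      apply (WithLp.equiv 2 _).injective
      simp only [v, WithLp.equiv_symm_apply, Matrix.toEuclideanCLM_toLp, WithLp.equiv,
        Equiv.coe_fn_mk, WithLp.ofLp_toLp, WithLp.ofLp_smul]
      simpa [tl, Matrix.toLinAlgEquiv'_apply, f] using hfw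
    have hexpv : Matrix.toEuclideanCLM (𝕜 := ℂ) (NormedSpace.exp B) v = μ • v := by
      apply (WithLp.equiv 2 _).injective
      simp only [v, WithLp.equiv_symm_apply, Matrix.toEuclideanCLM_toLp, WithLp.equiv,
        Equiv.coe_fn_mk, WithLp.ofLp_toLp, WithLp.ofLp_smul]
      simpa [tl, Matrix.toLinAlgEquiv'_apply, g] using hgw
    rw [toEuclideanCLM_exp] at hexpv
    have := exp_apply_eigenvector (Matrix.toEuclideanCLM (𝕜 := ℂ) B) v lam hBv
    rw [this] at hexpv
    have hsub : (μ - Complex.exp lam) • v = 0 := by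
      rw [sub_smul, hexpv, sub_self]
    rcases smul_eq_zero.mp hsub with h | h
    · exact sub_eq_zero.mp h
    · exact absurd h hv0





-- norm comparison
lemma real_norm_le_complex_norm {M : ℕ} (N : Matrix (Fin M) (Fin M) ℝ) :
    ‖Matrix.toEuclideanCLM (𝕜 := ℝ) N‖
      ≤ ‖Matrix.toEuclideanCLM (𝕜 := ℂ) (N.map Complex.ofReal)‖ := by
  refine ContinuousLinearMap.opNorm_le_bound _ (norm_nonneg _) (fun x => ?_)
  set xc : EuclideanSpace ℂ (Fin M) :=
    (WithLp.equiv 2 _).symm (fun i => (((WithLp.equiv 2 _) x) i : ℂ)) with hxc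
  have hnx : ‖xc‖ = ‖x‖ := by
    rw [EuclideanSpace.norm_eq, EuclideanSpace.norm_eq]
    congr 1
    apply Finset.sum_congr rfl
    intro i _
    simp [xc]
  have key : Matrix.toEuclideanCLM (𝕜 := ℂ) (N.map Complex.ofReal) xc
      = (WithLp.equiv 2 _).symm
          (fun i => (((WithLp.equiv 2 _) (Matrix.toEuclideanCLM (𝕜 := ℝ) N x)) i : ℂ)) := by
    apply (WithLp.equiv 2 _).injective
    simp only [xc, WithLp.equiv_symm_apply, Matrix.toEuclideanCLM_toLp, WithLp.equiv,
      Equiv.coe_fn_mk, WithLp.ofLp_toLp, Matrix.ofLp_toEuclideanCLM]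
    funext i
    exact (RingHom.map_mulVec Complex.ofRealHom N ((WithLp.equiv 2 _) x) i).symm
  have hnorm2 : ‖Matrix.toEuclideanCLM (𝕜 := ℝ) N x‖
      = ‖Matrix.toEuclideanCLM (𝕜 := ℂ) (N.map Complex.ofReal) xc‖ := by
    rw [key, EuclideanSpace.norm_eq, EuclideanSpace.norm_eq]
    congr 1
    apply Finset.sum_congr rfl
    intro i _
    simp
  rw [hnorm2, ← hnx]
  exact ContinuousLinearMap.le_opNorm _ _





lemma toEuclideanCLM_exp_real {M : ℕ} (N : Matrix (Fin M) (Fin M) ℝ) :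
    Matrix.toEuclideanCLM (𝕜 := ℝ) (NormedSpace.exp N)
      = NormedSpace.exp (Matrix.toEuclideanCLM (𝕜 := ℝ) N) := by
  have hcont : Continuous ⇑(Matrix.toEuclideanCLM (𝕜 := ℝ) (n := Fin M)) :=
    LinearMap.continuous_of_finiteDimensional
      (AlgHomClass.toAlgHom (Matrix.toEuclideanCLM (𝕜 := ℝ) (n := Fin M))).toLinearMap
  exact map_exp _ hcont N

lemma map_ofReal_exp {M : ℕ} (N : Matrix (Fin M) (Fin M) ℝ) :
    (NormedSpace.exp N).map Complex.ofReal
      = NormedSpace.exp (N.map Complex.ofReal) := by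
  have hcont : Continuous (fun P : Matrix (Fin M) (Fin M) ℝ => P.map Complex.ofReal) :=
    Continuous.matrix_map continuous_id Complex.continuous_ofReal
  have h1 : (NormedSpace.exp N).map Complex.ofReal
      = NormedSpace.exp (N.map Complex.ofReal) :=
    map_exp (Complex.ofRealHom.mapMatrix) hcont N
  rw [h1]

lemma norm_exp_real_le_complex {M : ℕ} (A : Matrix (Fin M) (Fin M) ℝ) (t : ℝ) :
    ‖NormedSpace.exp (t • (Matrix.toEuclideanCLM (𝕜 := ℝ) A))‖
      ≤ ‖NormedSpace.exp (t • (Matrix.toEuclideanCLM (𝕜 := ℂ) (A.map Complex.ofReal)))‖ := by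
  have h1 : NormedSpace.exp (t • (Matrix.toEuclideanCLM (𝕜 := ℝ) A))
      = Matrix.toEuclideanCLM (𝕜 := ℝ) (NormedSpace.exp (t • A)) := by
    rw [toEuclideanCLM_exp_real, _root_.map_smul]
  have h2 : ((NormedSpace.exp (t • A)).map Complex.ofReal)
      = NormedSpace.exp ((t • A).map Complex.ofReal) := map_ofReal_exp _
  have h3 : ((t • A).map Complex.ofReal) = t • (A.map Complex.ofReal) := by
    ext i j
    simp [Complex.real_smul]
  have h4 : NormedSpace.exp (t • (Matrix.toEuclideanCLM (𝕜 := ℂ) (A.map Complex.ofReal)))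
      = Matrix.toEuclideanCLM (𝕜 := ℂ) (NormedSpace.exp (t • (A.map Complex.ofReal))) := by
    rw [toEuclideanCLM_exp]
    congr 1
    rw [← algebraMap_smul ℂ t (A.map Complex.ofReal), ← algebraMap_smul ℂ t
      (Matrix.toEuclideanCLM (𝕜 := ℂ) (A.map Complex.ofReal)), _root_.map_smul]
  rw [h1, h4, ← h3, ← h2]
  exact real_norm_le_complex_norm _





set_option maxHeartbeats 1000000 in
set_option synthInstance.maxHeartbeats 400000 in
lemma exp_growth_bound {M : ℕ} (A : Matrix (Fin M) (Fin M) ℝ) (η : ℝ)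
    (hA : ∀ ρ ∈ spectrum ℂ (A.map Complex.ofReal), ρ.re < η) :
    ∃ C : ℝ, 0 ≤ C ∧ ∀ t : ℝ, 0 ≤ t →
      ‖NormedSpace.exp (t • (Matrix.toEuclideanCLM (𝕜 := ℝ) A))‖ ≤ C * Real.exp (η * t) := by
  rcases isEmpty_or_nonempty (Fin M) with hM | hM
  · refine ⟨1, zero_le_one, fun t ht => ?_⟩
    haveI : Subsingleton (EuclideanSpace ℝ (Fin M) →L[ℝ] EuclideanSpace ℝ (Fin M)) :=
      ⟨fun f g => ContinuousLinearMap.ext fun x => Subsingleton.elim _ _⟩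
    have : (NormedSpace.exp (t • (Matrix.toEuclideanCLM (𝕜 := ℝ) A)))
        = 0 := Subsingleton.elim _ _
    rw [this, norm_zero, one_mul]
    positivity
  -- nonempty case
  set B := A.map Complex.ofReal with hB
  set L : EuclideanSpace ℂ (Fin M) →L[ℂ] EuclideanSpace ℂ (Fin M) :=
    Matrix.toEuclideanCLM (𝕜 := ℂ) B with hL
  set a := NormedSpace.exp L with ha
  -- spectrum of B is nonempty and finite
  haveI : Nontrivial (EuclideanSpace ℂ (Fin M)) := by infer_instance
  haveI : Nontrivial (EuclideanSpace ℂ (Fin M) →L[ℂ] EuclideanSpace ℂ (Fin M)) := by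
    obtain ⟨v, hv⟩ := exists_ne (0 : EuclideanSpace ℂ (Fin M))
    refine ⟨1, 0, fun h => hv ?_⟩
    have := congrArg (fun T : EuclideanSpace ℂ (Fin M) →L[ℂ] EuclideanSpace ℂ (Fin M) => T v) h
    simpa using this
  have hne : (spectrum ℂ B).Nonempty := by
    have := spectrum.nonempty L
    rwa [hL, AlgEquiv.spectrum_eq] at this
  have hfin : (spectrum ℂ B).Finite := by
    have heq : spectrum ℂ B = {μ | Module.End.HasEigenvalue (Matrix.toLinAlgEquiv' B) μ} := by
      ext μ
      rw [← AlgEquiv.spectrum_eq (Matrix.toLinAlgEquiv' (R := ℂ) (n := Fin M)) B]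
      exact (Module.End.hasEigenvalue_iff_mem_spectrum).symm
    rw [heq]
    exact Module.End.finite_hasEigenvalue _
  obtain ⟨ρ₀, hmem, hmax⟩ := Set.exists_max_image _ Complex.re hfin hne
  set α := ρ₀.re with hα
  have hαη : α < η := hA ρ₀ hmem
  set η' := (α + η) / 2 with hη'
  have hαη' : α < η' := by rw [hη']; linarith
  have hη'η : η' < η := by rw [hη']; linarith
  -- spectral radius bound
  have hsr : spectralRadius ℂ a ≤ ENNReal.ofReal (Real.exp α) := by
    rw [spectralRadius]
    refine iSup₂_le fun μ hμ => ?_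
    obtain ⟨lam, hlam, rfl⟩ := spectrum_exp_subset B μ hμ
    rw [← enorm_eq_nnnorm, ← ofReal_norm]
    refine ENNReal.ofReal_le_ofReal ?_
    rw [Complex.norm_exp]
    exact Real.exp_le_exp.mpr (hmax lam hlam)
  -- Gelfand
  have hgelf := spectrum.pow_norm_pow_one_div_tendsto_nhds_spectralRadius a
  have hlt : spectralRadius ℂ a < ENNReal.ofReal (Real.exp η') :=
    lt_of_le_of_lt hsr (by
      rw [ENNReal.ofReal_lt_ofReal_iff (Real.exp_pos _)]
      exact Real.exp_lt_exp.mpr hαη')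
  have hev : ∀ᶠ n : ℕ in atTop, ENNReal.ofReal (‖a ^ n‖ ^ (1 / (n:ℝ)))
      < ENNReal.ofReal (Real.exp η') := hgelf.eventually_lt_const hlt
  obtain ⟨N, hN⟩ := hev.exists_forall_of_atTop
  set N₀ := max N 1 with hN₀
  have hpowN : ∀ n : ℕ, N₀ ≤ n → ‖a ^ n‖ ≤ Real.exp (η' * n) := by
    intro n hn
    have hn1 : 1 ≤ n := le_trans (le_max_right N 1) hn
    have h := hN n (le_trans (le_max_left N 1) hn)
    rw [ENNReal.ofReal_lt_ofReal_iff (Real.exp_pos _)] at h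
    have hnn : 0 ≤ ‖a ^ n‖ := norm_nonneg _
    have key : ‖a ^ n‖ = (‖a ^ n‖ ^ (1 / (n:ℝ))) ^ n := by
      rw [one_div, Real.rpow_inv_natCast_pow hnn (by omega)]
    calc ‖a ^ n‖ = (‖a ^ n‖ ^ (1 / (n:ℝ))) ^ n := key
    _ ≤ (Real.exp η') ^ n := pow_le_pow_left₀ (Real.rpow_nonneg hnn _) h.le n
    _ = Real.exp (η' * n) := by rw [← Real.exp_nat_mul, mul_comm]
  -- crude bound for small n
  have hcrude : ∀ n : ℕ, ‖a ^ n‖ ≤ (max 1 ‖a‖) ^ n := by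
    intro n
    induction n with
    | zero => simpa using ContinuousLinearMap.norm_id_le
    | succ n ih =>
        rw [pow_succ, pow_succ]
        calc ‖a ^ n * a‖ ≤ ‖a ^ n‖ * ‖a‖ := norm_mul_le _ _
        _ ≤ (max 1 ‖a‖) ^ n * max 1 ‖a‖ := by
            apply mul_le_mul ih (le_max_right _ _) (norm_nonneg _)
            positivity
  set c := (max 1 ‖a‖) ^ N₀ * Real.exp (|η'| * N₀) with hc
  have hc1 : 1 ≤ c := by
    apply one_le_mul_of_one_le_of_one_le
    · exact one_le_pow₀ (le_max_left _ _)
    · exact Real.one_le_exp (by positivity)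
  have hpow : ∀ n : ℕ, ‖a ^ n‖ ≤ c * Real.exp (η' * n) := by
    intro n
    rcases le_or_gt (N₀ : ℕ) n with h | h
    · calc ‖a ^ n‖ ≤ Real.exp (η' * n) := hpowN n h
      _ ≤ c * Real.exp (η' * n) := le_mul_of_one_le_left (Real.exp_pos _).le hc1
    · have h1 : ‖a ^ n‖ ≤ (max 1 ‖a‖) ^ N₀ :=
        le_trans (hcrude n) (pow_le_pow_right₀ (le_max_left _ _) h.le)
      have h3 : -(η' * n) ≤ |η'| * N₀ := by
        have he : -(η' * n) = (-η') * n := by ring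
        rw [he]
        calc (-η') * n ≤ |η'| * n :=
              mul_le_mul_of_nonneg_right (neg_le_abs η') (Nat.cast_nonneg n)
        _ ≤ |η'| * N₀ := mul_le_mul_of_nonneg_left (Nat.cast_le.mpr h.le) (abs_nonneg _)
      have h2 : (1:ℝ) ≤ Real.exp (|η'| * N₀) * Real.exp (η' * n) := by
        rw [← Real.exp_add]; apply Real.one_le_exp; linarith
      calc ‖a ^ n‖ ≤ (max 1 ‖a‖) ^ N₀ := h1
      _ ≤ (max 1 ‖a‖) ^ N₀ * (Real.exp (|η'| * N₀) * Real.exp (η' * n)) :=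
          le_mul_of_one_le_right (by positivity) h2
      _ = c * Real.exp (η' * n) := by rw [hc]; ring
  -- bound on the unit interval
  letI : NormedAlgebra ℚ (EuclideanSpace ℂ (Fin M) →L[ℂ] EuclideanSpace ℂ (Fin M)) :=
    .restrictScalars ℚ ℂ _
  obtain ⟨M₀, hM₀⟩ := (isCompact_Icc (a := (0:ℝ)) (b := 1)).exists_bound_of_continuousOn
    (f := fun s : ℝ => NormedSpace.exp (s • L))
    (Continuous.continuousOn (by
      exact NormedSpace.exp_continuous.comp (continuous_id.smul continuous_const)))
  set D := max M₀ 1 with hD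
  have hD1 : (1:ℝ) ≤ D := le_max_right _ _
  haveI hsc : SMulCommClass ℝ (EuclideanSpace ℂ (Fin M) →L[ℂ] EuclideanSpace ℂ (Fin M))
      (EuclideanSpace ℂ (Fin M) →L[ℂ] EuclideanSpace ℂ (Fin M)) :=
    ⟨fun r f g => by
      ext x
      simp [ContinuousLinearMap.smul_apply, ContinuousLinearMap.mul_apply]⟩
  haveI hst : IsScalarTower ℝ (EuclideanSpace ℂ (Fin M) →L[ℂ] EuclideanSpace ℂ (Fin M))
      (EuclideanSpace ℂ (Fin M) →L[ℂ] EuclideanSpace ℂ (Fin M)) :=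
    ⟨fun r f g => by
      ext x
      simp [ContinuousLinearMap.smul_apply, ContinuousLinearMap.mul_apply]⟩
  have hmain : ∀ (n : ℕ) (s : ℝ), 0 ≤ s → s ≤ 1 →
      ‖NormedSpace.exp (((n:ℝ) + s) • L)‖
        ≤ c * D * Real.exp |η'| * Real.exp (η * ((n:ℝ) + s)) := by
    intro n s hs0 hs1
    have hsplit : NormedSpace.exp (((n:ℝ) + s) • L)
        = a ^ n * NormedSpace.exp (s • L) := by
      have h₁ : ((n:ℝ) + s) • L = (n:ℝ) • L + s • L := add_smul ((n:ℕ):ℝ) s L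
      rw [h₁, NormedSpace.exp_add_of_commute
        (((Commute.refl L).smul_left _).smul_right _)]
      congr 1
      have h₂ : ((n:ℝ)) • L = n • L := Nat.cast_smul_eq_nsmul ℝ n L
      rw [h₂, NormedSpace.exp_nsmul, ha]
    rw [hsplit]
    have hbd : ‖NormedSpace.exp (s • L)‖ ≤ D :=
      le_trans (hM₀ s ⟨hs0, hs1⟩) (le_max_left _ _)
    have ht : (0:ℝ) ≤ (n:ℝ) + s := by positivity
    calc ‖a ^ n * NormedSpace.exp (s • L)‖
        ≤ ‖a ^ n‖ * ‖NormedSpace.exp (s • L)‖ := norm_mul_le _ _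
    _ ≤ (c * Real.exp (η' * n)) * D :=
        mul_le_mul (hpow n) hbd (norm_nonneg _) (by positivity)
    _ ≤ c * D * Real.exp |η'| * Real.exp (η * ((n:ℝ) + s)) := by
        have he1 : Real.exp (η' * n)
            = Real.exp (η' * ((n:ℝ) + s)) * Real.exp (-η' * s) := by
          rw [← Real.exp_add]; congr 1; ring
        have he2 : Real.exp (η' * ((n:ℝ) + s)) ≤ Real.exp (η * ((n:ℝ) + s)) :=
          Real.exp_le_exp.mpr (mul_le_mul_of_nonneg_right hη'η.le ht)
        have he3 : Real.exp (-η' * s) ≤ Real.exp |η'| := by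
          apply Real.exp_le_exp.mpr
          calc -η' * s ≤ |η'| * s := mul_le_mul_of_nonneg_right (neg_le_abs η') hs0
          _ ≤ |η'| * 1 := mul_le_mul_of_nonneg_left hs1 (abs_nonneg _)
          _ = |η'| := mul_one _
        calc (c * Real.exp (η' * n)) * D
            = c * D * (Real.exp (η' * ((n:ℝ) + s)) * Real.exp (-η' * s)) := by
              rw [he1]; ring
        _ ≤ c * D * (Real.exp (η * ((n:ℝ) + s)) * Real.exp |η'|) := by
            apply mul_le_mul_of_nonneg_left _ (by positivity)
            exact mul_le_mul he2 he3 (Real.exp_pos _).le (Real.exp_pos _).le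
        _ = c * D * Real.exp |η'| * Real.exp (η * ((n:ℝ) + s)) := by ring
  refine ⟨c * D * Real.exp |η'|, by positivity, fun t ht => ?_⟩
  refine le_trans (norm_exp_real_le_complex A t) ?_
  have ht' : t = ((⌊t⌋₊:ℝ)) + (t - (⌊t⌋₊:ℝ)) := by ring
  have h0 : (0:ℝ) ≤ t - (⌊t⌋₊:ℝ) := sub_nonneg.mpr (Nat.floor_le ht)
  have h1 : t - (⌊t⌋₊:ℝ) ≤ 1 := by
    have := Nat.lt_floor_add_one t
    linarith
  calc ‖NormedSpace.exp (t • L)‖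
      = ‖NormedSpace.exp (((⌊t⌋₊:ℝ) + (t - (⌊t⌋₊:ℝ))) • L)‖ := by rw [← ht']
  _ ≤ c * D * Real.exp |η'| * Real.exp (η * ((⌊t⌋₊:ℝ) + (t - (⌊t⌋₊:ℝ)))) :=
      hmain ⌊t⌋₊ _ h0 h1
  _ = c * D * Real.exp |η'| * Real.exp (η * t) := by rw [← ht']





noncomputable def Phi (A : Matrix (Fin M) (Fin M) ℝ) (r : ℝ) :
    EuclideanSpace ℝ (Fin M) →L[ℝ] EuclideanSpace ℝ (Fin M) :=
  NormedSpace.exp (r • (Matrix.toEuclideanCLM (𝕜 := ℝ) A))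

set_option maxHeartbeats 1000000 in
set_option synthInstance.maxHeartbeats 400000 in
lemma variation_of_constants (A : Matrix (Fin M) (Fin M) ℝ) (t₀ T : ℝ) (hT : t₀ ≤ T)
    (ξ y : ℝ → EuclideanSpace ℝ (Fin M))
    (hξcont : ContinuousOn ξ (Ici t₀))
    (hy : ∀ t ∈ Ici t₀, HasDerivAt y (Matrix.toEuclideanCLM (𝕜 := ℝ) A (y t) + ξ t) t) :
    y T = Phi A (T - t₀) (y t₀) + ∫ s in t₀..T, Phi A (T - s) (ξ s) := by
  letI : NormedAlgebra ℚ (EuclideanSpace ℝ (Fin M) →L[ℝ] EuclideanSpace ℝ (Fin M)) :=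
    .restrictScalars ℚ ℝ _
  set Lr := Matrix.toEuclideanCLM (𝕜 := ℝ) A with hLr
  have hu : ∀ s ∈ Set.uIcc t₀ T, HasDerivAt (fun r => Phi A (T - r) (y r))
      (Phi A (T - s) (ξ s)) s := by
    intro s hs
    rw [uIcc_of_le hT] at hs
    have hs' : s ∈ Ici t₀ := hs.1
    have hc : HasDerivAt (fun r : ℝ => Phi A (T - r))
        ((-1 : ℝ) • (Phi A (T - s) * Lr)) s := by
      have h1 : HasDerivAt (fun r : ℝ => T - r) (-1 : ℝ) s := by
        simpa using (hasDerivAt_id s).const_sub T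
      have h2 := hasDerivAt_exp_smul_const (𝕂 := ℝ) Lr (T - s)
      exact HasDerivAt.scomp s h2 h1
    have hder := hc.clm_apply (hy s hs')
    refine hder.congr_deriv ?_
    simp only [ContinuousLinearMap.smul_apply, ContinuousLinearMap.mul_apply, map_add,
      neg_smul, one_smul, Phi]
    abel
  have hint : IntervalIntegrable (fun s => Phi A (T - s) (ξ s)) volume t₀ T := by
    apply ContinuousOn.intervalIntegrable
    rw [uIcc_of_le hT]
    apply ContinuousOn.clm_apply
    · exact Continuous.continuousOn
        (NormedSpace.exp_continuous.comp ((continuous_const.sub continuous_id).smul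
          continuous_const))
    · exact hξcont.mono Icc_subset_Ici_self
  have heq := intervalIntegral.integral_eq_sub_of_hasDerivAt hu hint
  have huT : Phi A (T - T) (y T) = y T := by
    rw [Phi, sub_self, show (0:ℝ) • Lr = 0 from zero_smul ℝ Lr, NormedSpace.exp_zero,
      ContinuousLinearMap.one_apply]
  rw [huT] at heq
  rw [heq]
  abel






set_option maxHeartbeats 1000000 in
theorem part2 (A : Matrix (Fin M) (Fin M) ℝ) (η C : ℝ) (hC0 : 0 ≤ C)
    (hC : ∀ t : ℝ, 0 ≤ t → ‖Phi A t‖ ≤ C * Real.exp (η * t))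
    (δ : ℝ) (hδ : 0 < δ) (t₀ : ℝ) (ξ y : ℝ → EuclideanSpace ℝ (Fin M))
    (hξcont : ContinuousOn ξ (Ici t₀))
    (hy : ∀ t ∈ Ici t₀, HasDerivAt y (Matrix.toEuclideanCLM (𝕜 := ℝ) A (y t) + ξ t) t)
    (hbound : ∀ t ∈ Ici t₀, ‖ξ t‖ ≤ δ * ‖y t‖) :
    ∀ t ∈ Ici t₀, ‖y t‖ ≤ C * ‖y t₀‖ * Real.exp ((η + C * δ) * (t - t₀)) := by
  intro t ht
  have ht' : t₀ ≤ t := ht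
  -- continuity of y and of v
  have hycont : ContinuousOn y (Ici t₀) := fun s hs =>
    ((hy s hs).continuousAt).continuousWithinAt
  set v : ℝ → ℝ := fun s => Real.exp (-η * (s - t₀)) * ‖y s‖ with hv
  have hv_nonneg : ∀ s, 0 ≤ v s := fun s => by positivity
  set w : ℝ → ℝ := fun s => v (max s t₀) with hw
  have hw_cont : Continuous w := by
    have h1 : Continuous fun s : ℝ => max s t₀ := continuous_id.max continuous_const
    have h2 : Continuous fun s : ℝ => y (max s t₀) :=
      hycont.comp_continuous h1 (fun x => mem_Ici.mpr (le_max_right _ _))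
    have h3 : Continuous fun s : ℝ => ‖y (max s t₀)‖ := h2.norm
    exact (Real.continuous_exp.comp
      (continuous_const.mul (h1.sub continuous_const))).mul h3
  have hw_nonneg : ∀ s, 0 ≤ w s := fun s => hv_nonneg _
  have hvw : ∀ s, t₀ ≤ s → v s = w s := by
    intro s hs; rw [hw]; simp only; rw [max_eq_left hs]
  -- integral inequality
  have hineq : ∀ T, t₀ ≤ T → v T ≤ C * ‖y t₀‖ + (C * δ) * ∫ s in t₀..T, w s := by
    intro T hT
    letI : NormedAlgebra ℚ (EuclideanSpace ℝ (Fin M) →L[ℝ] EuclideanSpace ℝ (Fin M)) :=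
      .restrictScalars ℚ ℝ _
    have hvoc := variation_of_constants A t₀ T hT ξ y hξcont hy
    -- norm bound on y T
    have hPhi_cont : ContinuousOn (fun s => Phi A (T - s) (ξ s)) (Icc t₀ T) := by
      apply ContinuousOn.clm_apply
      · exact Continuous.continuousOn
          (NormedSpace.exp_continuous.comp ((continuous_const.sub continuous_id).smul
            continuous_const))
      · exact hξcont.mono Icc_subset_Ici_self
    have hI1 : IntervalIntegrable (fun s => ‖Phi A (T - s) (ξ s)‖) volume t₀ T := by
      apply ContinuousOn.intervalIntegrable
      rw [uIcc_of_le hT]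
      exact hPhi_cont.norm
    have hI2 : IntervalIntegrable (fun s => C * Real.exp (η * (T - s)) * (δ * ‖y s‖))
        volume t₀ T := by
      apply ContinuousOn.intervalIntegrable
      rw [uIcc_of_le hT]
      apply ContinuousOn.mul
      · exact (continuous_const.mul (Real.continuous_exp.comp
          (continuous_const.mul (continuous_const.sub continuous_id)))).continuousOn
      · exact continuousOn_const.mul ((hycont.mono Icc_subset_Ici_self).norm)
    have hnormyT : ‖y T‖ ≤ C * Real.exp (η * (T - t₀)) * ‖y t₀‖
        + ∫ s in t₀..T, C * Real.exp (η * (T - s)) * (δ * ‖y s‖) := by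
      rw [hvoc]
      refine le_trans (norm_add_le _ _) (add_le_add ?_ ?_)
      · calc ‖Phi A (T - t₀) (y t₀)‖ ≤ ‖Phi A (T - t₀)‖ * ‖y t₀‖ :=
            ContinuousLinearMap.le_opNorm _ _
        _ ≤ C * Real.exp (η * (T - t₀)) * ‖y t₀‖ :=
            mul_le_mul_of_nonneg_right (hC _ (by linarith)) (norm_nonneg _)
      · refine le_trans (intervalIntegral.norm_integral_le_integral_norm hT) ?_
        apply intervalIntegral.integral_mono_on hT hI1 hI2
        intro s hs
        calc ‖Phi A (T - s) (ξ s)‖ ≤ ‖Phi A (T - s)‖ * ‖ξ s‖ :=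
            ContinuousLinearMap.le_opNorm _ _
        _ ≤ (C * Real.exp (η * (T - s))) * (δ * ‖y s‖) := by
            apply mul_le_mul (hC _ (by linarith [hs.2])) (hbound s hs.1) (norm_nonneg _)
            positivity
    -- multiply by exp(-η (T - t₀))
    have hcancel : Real.exp (-η * (T - t₀)) * Real.exp (η * (T - t₀)) = 1 := by
      rw [← Real.exp_add, show -η * (T - t₀) + η * (T - t₀) = 0 by ring, Real.exp_zero]
    have heq2 : Real.exp (-η * (T - t₀)) * (C * Real.exp (η * (T - t₀)) * ‖y t₀‖)
        = C * ‖y t₀‖ := by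
      calc Real.exp (-η * (T - t₀)) * (C * Real.exp (η * (T - t₀)) * ‖y t₀‖)
          = C * ‖y t₀‖ * (Real.exp (-η * (T - t₀)) * Real.exp (η * (T - t₀))) := by ring
      _ = C * ‖y t₀‖ := by rw [hcancel, mul_one]
    have hcong : (∫ s in t₀..T, Real.exp (-η * (T - t₀))
          * (C * Real.exp (η * (T - s)) * (δ * ‖y s‖)))
        = ∫ s in t₀..T, (C * δ) * w s := by
      apply intervalIntegral.integral_congr
      intro s hs
      rw [uIcc_of_le hT] at hs
      have h4 : Real.exp (-η * (T - t₀)) * Real.exp (η * (T - s))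
          = Real.exp (-η * (s - t₀)) := by
        rw [← Real.exp_add, show -η * (T - t₀) + η * (T - s) = -η * (s - t₀) by ring]
      calc Real.exp (-η * (T - t₀)) * (C * Real.exp (η * (T - s)) * (δ * ‖y s‖))
          = C * δ * ((Real.exp (-η * (T - t₀)) * Real.exp (η * (T - s))) * ‖y s‖) := by ring
      _ = C * δ * (Real.exp (-η * (s - t₀)) * ‖y s‖) := by rw [h4]
      _ = C * δ * v s := rfl
      _ = C * δ * w s := by rw [hvw s hs.1]
    have hstep : v T ≤ C * ‖y t₀‖
        + Real.exp (-η * (T - t₀)) * ∫ s in t₀..T, C * Real.exp (η * (T - s)) * (δ * ‖y s‖) := by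
      rw [hv]
      simp only
      calc Real.exp (-η * (T - t₀)) * ‖y T‖
          ≤ Real.exp (-η * (T - t₀)) * (C * Real.exp (η * (T - t₀)) * ‖y t₀‖
            + ∫ s in t₀..T, C * Real.exp (η * (T - s)) * (δ * ‖y s‖)) :=
          mul_le_mul_of_nonneg_left hnormyT (Real.exp_pos _).le
      _ = Real.exp (-η * (T - t₀)) * (C * Real.exp (η * (T - t₀)) * ‖y t₀‖)
            + Real.exp (-η * (T - t₀))
              * ∫ s in t₀..T, C * Real.exp (η * (T - s)) * (δ * ‖y s‖) := by ring
      _ = _ := by rw [heq2]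
    calc v T ≤ C * ‖y t₀‖
          + Real.exp (-η * (T - t₀)) * ∫ s in t₀..T, C * Real.exp (η * (T - s)) * (δ * ‖y s‖) :=
        hstep
    _ = C * ‖y t₀‖ + ∫ s in t₀..T, Real.exp (-η * (T - t₀))
          * (C * Real.exp (η * (T - s)) * (δ * ‖y s‖)) := by
        rw [intervalIntegral.integral_const_mul]
    _ = C * ‖y t₀‖ + ∫ s in t₀..T, (C * δ) * w s := by rw [hcong]
    _ = C * ‖y t₀‖ + (C * δ) * ∫ s in t₀..T, w s := by
        rw [intervalIntegral.integral_const_mul]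
  -- Gronwall argument
  set F : ℝ → ℝ := fun r => ∫ s in t₀..r, w s with hF
  have hFderiv : ∀ r : ℝ, HasDerivAt F (w r) r := fun r =>
    (hw_cont.integral_hasStrictDerivAt t₀ r).hasDerivAt
  set h : ℝ → ℝ := fun r => C * ‖y t₀‖ + (C * δ) * F r with hh
  have hhderiv : ∀ r : ℝ, HasDerivAt h ((C * δ) * w r) r := fun r =>
    ((hFderiv r).const_mul _).const_add _
  have hF_nonneg : ∀ r, t₀ ≤ r → 0 ≤ F r := fun r hr =>
    intervalIntegral.integral_nonneg hr (fun s _ => hw_nonneg s)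
  have hh_nonneg : ∀ r, t₀ ≤ r → 0 ≤ h r := fun r hr =>
    add_nonneg (by positivity) (mul_nonneg (by positivity) (hF_nonneg r hr))
  have hwh : ∀ r, t₀ ≤ r → w r ≤ h r := by
    intro r hr
    rw [← hvw r hr]
    exact hineq r hr
  have hgron := norm_le_gronwallBound_of_norm_deriv_right_le
    (f := h) (f' := fun r => (C * δ) * w r) (δ := C * ‖y t₀‖) (K := C * δ) (ε := 0)
    (a := t₀) (b := t)
    (Continuous.continuousOn (continuous_const.add (continuous_const.mul
      (continuous_iff_continuousAt.mpr (fun r => (hFderiv r).continuousAt)))))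
    (fun r _ => (hhderiv r).hasDerivWithinAt)
    (by
      have hFt₀ : F t₀ = 0 := intervalIntegral.integral_same
      rw [hh]
      simp only
      rw [hFt₀, mul_zero, add_zero, Real.norm_eq_abs, abs_of_nonneg (by positivity)])
    (fun r hr => by
      rw [Real.norm_eq_abs, abs_of_nonneg (mul_nonneg (by positivity) (hw_nonneg r)),
        Real.norm_eq_abs, abs_of_nonneg (hh_nonneg r hr.1), add_zero]
      exact mul_le_mul_of_nonneg_left (hwh r hr.1) (by positivity))
  have hht := hgron t ⟨ht', le_refl t⟩
  rw [Real.norm_eq_abs, abs_of_nonneg (hh_nonneg t ht'), gronwallBound_ε0] at hht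
  have hvt : v t ≤ C * ‖y t₀‖ * Real.exp (C * δ * (t - t₀)) := by
    rw [hvw t ht']
    exact (hwh t ht').trans hht
  have hyt : ‖y t‖ = Real.exp (η * (t - t₀)) * v t := by
    rw [hv]
    simp only
    rw [← mul_assoc, ← Real.exp_add, show η * (t - t₀) + -η * (t - t₀) = 0 by ring,
      Real.exp_zero, one_mul]
  rw [hyt]
  calc Real.exp (η * (t - t₀)) * v t
      ≤ Real.exp (η * (t - t₀)) * (C * ‖y t₀‖ * Real.exp (C * δ * (t - t₀))) :=
      mul_le_mul_of_nonneg_left hvt (Real.exp_pos _).le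
  _ = C * ‖y t₀‖ * (Real.exp (η * (t - t₀)) * Real.exp (C * δ * (t - t₀))) := by ring
  _ = C * ‖y t₀‖ * Real.exp ((η + C * δ) * (t - t₀)) := by
    rw [← Real.exp_add, show η * (t - t₀) + C * δ * (t - t₀) = (η + C * δ) * (t - t₀) by ring]

end PerturbedODEAux

end PerturbedODEHelpers

/-- **Perturbed linear ODEs with spectral gap (continuous-time Gronwall estimate).**
Let `A` be a real `m × m` matrix and `η ∈ ℝ` with `η > Re ρ` for every complex eigenvalue
`ρ` of `A`. Then there is `C ≥ 0` with `‖e^{tA}‖ ≤ C e^{ηt}` for all `t ≥ 0`, such that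
for every `δ > 0`, every `t₀`, every continuous `ξ : [t₀,∞) → ℝ^m` and every differentiable
`y` with `y' = Ay + ξ` and `‖ξ(t)‖ ≤ δ‖y(t)‖` on `[t₀,∞)`, one has
`‖y(t)‖ ≤ C‖y(t₀)‖ e^{(η + Cδ)(t - t₀)}` for all `t ≥ t₀`. -/
theorem perturbed_linear_ode_exponential_bound
    (m : ℕ) (A : Matrix (Fin m) (Fin m) ℝ) (η : ℝ)
    (hA : ∀ ρ ∈ spectrum ℂ (A.map Complex.ofReal), ρ.re < η) :
    ∃ C : ℝ, 0 ≤ C ∧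
      (∀ t : ℝ, 0 ≤ t →
        ‖NormedSpace.exp
            (t • (Matrix.toEuclideanCLM (𝕜 := ℝ) A :
              EuclideanSpace ℝ (Fin m) →L[ℝ] EuclideanSpace ℝ (Fin m)))‖ ≤
          C * Real.exp (η * t)) ∧
      ∀ δ : ℝ, 0 < δ → ∀ t₀ : ℝ, ∀ ξ y : ℝ → EuclideanSpace ℝ (Fin m),
        ContinuousOn ξ (Ici t₀) →
        (∀ t ∈ Ici t₀, HasDerivAt y (Matrix.toEuclideanCLM (𝕜 := ℝ) A (y t) + ξ t) t) →
        (∀ t ∈ Ici t₀, ‖ξ t‖ ≤ δ * ‖y t‖) →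
        ∀ t ∈ Ici t₀, ‖y t‖ ≤ C * ‖y t₀‖ * Real.exp ((η + C * δ) * (t - t₀)) := by
  obtain ⟨C, hC0, hCb⟩ := PerturbedODEAux.exp_growth_bound A η hA
  refine ⟨C, hC0, hCb, ?_⟩
  intro δ hδ t₀ ξ y hξcont hy hbound
  exact PerturbedODEAux.part2 A η C hC0 hCb δ hδ t₀ ξ y hξcont hy hbound
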